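/- Let N ≥ 1 and, for m ∈ {1,2}, let f_m(x) = xᴴ A_m x + 2 Re(b_mᴴ x) + c_m, where A_m ∈ ℂ^{N×N} is Hermitian, b_m ∈ ℂ^N, and c_m ∈ ℝ. Suppose there exists x̂ ∈ ℂ^N with f_1(x̂) < 0. Then the implication (for all x ∈ ℂ^N, f_1(x) ≤ 0 implies f_2(x) ≤ 0) holds if and only if there exists δ ≥ 0 such that the (N+1)×(N+1) Hermitian block matrix δ·[[A_1, b_1],[b_1ᴴ, c_1]] − [[A_2, b_2],[b_2ᴴ, c_2]] is positive semidefinite. -/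

import Mathlib

open Matrix
open scoped ComplexOrder


/-- The quadratic function `f(x) = xᴴ A x + 2 Re(bᴴ x) + c` on `ℂ^N`. -/
noncomputable def quadF {N : ℕ} (A : Matrix (Fin N) (Fin N) ℂ) (b : Fin N → ℂ) (c : ℝ)
    (x : Fin N → ℂ) : ℝ :=
  (star x ⬝ᵥ A *ᵥ x).re + 2 * (star b ⬝ᵥ x).re + c

/-- The `(N+1)×(N+1)` Hermitian block matrix `[[A, b],[bᴴ, c]]`. -/
noncomputable def blockM {N : ℕ} (A : Matrix (Fin N) (Fin N) ℂ) (b : Fin N → ℂ) (c : ℝ) :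
    Matrix (Fin N ⊕ Unit) (Fin N ⊕ Unit) ℂ :=
  Matrix.fromBlocks A (Matrix.replicateCol Unit b) (Matrix.replicateRow Unit (star b))
    (Matrix.of fun _ _ => (c : ℂ))

set_option linter.unusedSectionVars false
namespace SProc

variable {n : Type*} [Fintype n] [DecidableEq n]

/-- real-valued quadratic form -/
noncomputable def qf (M : Matrix n n ℂ) (x : n → ℂ) : ℝ := (star x ⬝ᵥ M *ᵥ x).re

/-- norm squared -/
noncomputable def nsq (x : n → ℂ) : ℝ := (star x ⬝ᵥ x).re

lemma conj_cross (M : Matrix n n ℂ) (hM : M.IsHermitian) (u v : n → ℂ) :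
    (starRingEnd ℂ) (star u ⬝ᵥ M *ᵥ v) = star v ⬝ᵥ M *ᵥ u := by
  have h1 : star (star u ⬝ᵥ (M *ᵥ v)) = star (M *ᵥ v) ⬝ᵥ u := (star_dotProduct _ _).symm
  rw [starRingEnd_apply, h1, star_mulVec, hM.eq, dotProduct_mulVec]

lemma qf_add (M : Matrix n n ℂ) (hM : M.IsHermitian) (u v : n → ℂ) :
    qf M (u + v) = qf M u + qf M v + 2 * (star v ⬝ᵥ M *ᵥ u).re := by
  have h : star (u + v) ⬝ᵥ M *ᵥ (u + v)
      = star u ⬝ᵥ M *ᵥ u + star v ⬝ᵥ M *ᵥ v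
        + (star u ⬝ᵥ M *ᵥ v + star v ⬝ᵥ M *ᵥ u) := by
    simp [star_add, add_dotProduct, dotProduct_add, mulVec_add]
    ring
  have h2 : (star u ⬝ᵥ M *ᵥ v).re = (star v ⬝ᵥ M *ᵥ u).re := by
    rw [← conj_cross M hM u v, Complex.conj_re]
  simp only [qf, h, Complex.add_re, h2]
  ring

lemma qf_smul (M : Matrix n n ℂ) (c : ℂ) (x : n → ℂ) :
    qf M (c • x) = Complex.normSq c * qf M x := by
  have : star (c • x) ⬝ᵥ M *ᵥ (c • x) = (starRingEnd ℂ c * c) * (star x ⬝ᵥ M *ᵥ x) := by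
    rw [star_smul, mulVec_smul, smul_dotProduct, dotProduct_smul]
    simp [smul_smul, mul_assoc]
  have hc : (starRingEnd ℂ) c * c = (Complex.normSq c : ℂ) := by
    rw [mul_comm, Complex.mul_conj]
  rw [qf, this, hc, qf]
  simp [Complex.ofReal_mul]

noncomputable def nsq' (x : n → ℂ) : ℝ := qf 1 x

lemma nsq_eq (x : n → ℂ) : nsq' x = nsq x := by
  simp [nsq', nsq, qf, one_mulVec]

lemma nsq_pos {x : n → ℂ} (hx : x ≠ 0) : 0 < nsq' x := by
  rw [nsq_eq, nsq]
  have h : (0 : ℂ) < star x ⬝ᵥ x := Matrix.dotProduct_star_self_pos_iff.2 hx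
  simpa using (Complex.lt_def.mp h).1

lemma qf_addM (M N : Matrix n n ℂ) (x : n → ℂ) : qf (M + N) x = qf M x + qf N x := by
  simp [qf, add_mulVec, dotProduct_add]

lemma qf_subM (M N : Matrix n n ℂ) (x : n → ℂ) : qf (M - N) x = qf M x - qf N x := by
  simp [qf, sub_mulVec, dotProduct_sub]

lemma qf_smulM (r : ℝ) (M : Matrix n n ℂ) (x : n → ℂ) : qf ((r : ℂ) • M) x = r * qf M x := by
  simp [qf, smul_mulVec, dotProduct_smul]

lemma isHermitian_real_smul {r : ℝ} {M : Matrix n n ℂ} (hM : M.IsHermitian) :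
    ((r : ℂ) • M).IsHermitian := by
  unfold Matrix.IsHermitian
  rw [conjTranspose_smul, hM.eq]
  simp

/-- expansion of the quadratic form along the path `s • y + (1-s) • z`. -/
lemma path_expand (M : Matrix n n ℂ) (hM : M.IsHermitian) (y z : n → ℂ) (s : ℝ) :
    qf M ((s : ℂ) • y + ((1 - s : ℝ) : ℂ) • z)
      = s ^ 2 * qf M y + (1 - s) ^ 2 * qf M z
        + 2 * (s * (1 - s)) * (star z ⬝ᵥ M *ᵥ y).re := by
  rw [qf_add M hM, qf_smul, qf_smul]
  have hc : star (((1 - s : ℝ) : ℂ) • z) ⬝ᵥ M *ᵥ ((s : ℂ) • y)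
      = ((s * (1 - s) : ℝ) : ℂ) * (star z ⬝ᵥ M *ᵥ y) := by
    rw [star_smul, mulVec_smul, smul_dotProduct, dotProduct_smul]
    push_cast
    simp [smul_eq_mul]
    ring
  rw [hc]
  have h1 : Complex.normSq ((s : ℝ) : ℂ) = s ^ 2 := by rw [Complex.normSq_ofReal]; ring
  have h2 : Complex.normSq (((1 - s : ℝ)) : ℂ) = (1 - s) ^ 2 := by
    rw [Complex.normSq_ofReal]; ring
  have h3 : (((s * (1 - s) : ℝ) : ℂ) * (star z ⬝ᵥ M *ᵥ y)).re
      = s * (1 - s) * (star z ⬝ᵥ M *ᵥ y).re := by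
    rw [Complex.re_ofReal_mul]
  rw [h1, h2, h3]
  ring

lemma nsq'_smul (c : ℂ) (x : n → ℂ) : nsq' (c • x) = Complex.normSq c * nsq' x :=
  qf_smul 1 c x

lemma sphere_step (P Q : Matrix n n ℂ) (hP : P.IsHermitian) (hQ : Q.IsHermitian)
    (y z : n → ℂ) (hy : nsq' y = 1) (hz : nsq' z = 1) {t : ℝ} (ht0 : 0 ≤ t) (ht1 : t ≤ 1) :
    ∃ w : n → ℂ, nsq' w = 1 ∧ qf P w = t * qf P y + (1 - t) * qf P z ∧
      qf Q w = t * qf Q y + (1 - t) * qf Q z := by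
  by_cases hab : qf P y = qf P z ∧ qf Q y = qf Q z
  · exact ⟨y, hy, by rw [hab.1]; ring, by rw [hab.2]; ring⟩
  set a1 := qf P y with ha1; set a2 := qf Q y with ha2
  set b1 := qf P z with hb1; set b2 := qf Q z with hb2
  set d1 := a1 - b1 with hd1; set d2 := a2 - b2 with hd2
  have hd : 0 < d1 ^ 2 + d2 ^ 2 := by
    rcases not_and_or.mp hab with h | h
    · have h1 : d1 ≠ 0 := sub_ne_zero.2 h
      positivity
    · have h2 : d2 ≠ 0 := sub_ne_zero.2 h
      positivity
  set γ := -d2 * a1 + d1 * a2 with hγ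
  set R : Matrix n n ℂ := ((-d2 : ℝ) : ℂ) • P + ((d1 : ℝ) : ℂ) • Q - ((γ : ℝ) : ℂ) • 1
    with hRdef
  have hR : R.IsHermitian := by
    apply Matrix.IsHermitian.sub (Matrix.IsHermitian.add (isHermitian_real_smul hP)
      (isHermitian_real_smul hQ)) (isHermitian_real_smul Matrix.isHermitian_one)
  have qfR : ∀ v, qf R v = -d2 * qf P v + d1 * qf Q v - γ * nsq' v := by
    intro v
    rw [hRdef, qf_subM, qf_addM, qf_smulM, qf_smulM, qf_smulM]
    rfl
  have hRy : qf R y = 0 := by rw [qfR, hy, hγ]; ring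
  have hγb : γ = -d2 * b1 + d1 * b2 := by rw [hγ, hd1, hd2]; ring
  have hRz : qf R z = 0 := by rw [qfR, hz, hγb]; ring
  set c := star z ⬝ᵥ R *ᵥ y with hc
  set ω : ℂ := if c = 0 then 1 else Complex.I * (starRingEnd ℂ) c with hω
  have hω0 : ω ≠ 0 := by
    rw [hω]; split_ifs with h
    · exact one_ne_zero
    · exact mul_ne_zero Complex.I_ne_zero (by simpa using h)
  have hωc : (ω * c).re = 0 := by
    rw [hω]; split_ifs with h
    · simp [h]
    · have h2 : (starRingEnd ℂ) c * c = (Complex.normSq c : ℂ) := by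
        rw [mul_comm, Complex.mul_conj]
      rw [mul_assoc, h2]
      simp
  set k := Complex.normSq ω with hk
  have hk0 : 0 < k := Complex.normSq_pos.2 hω0
  set y' := ω • y with hy'def
  have hyP : qf P y' = k * a1 := by rw [hy'def, qf_smul, ha1]
  have hyQ : qf Q y' = k * a2 := by rw [hy'def, qf_smul, ha2]
  have hyN : nsq' y' = k := by rw [hy'def, nsq'_smul, hy, mul_one]
  have hRy' : qf R y' = 0 := by rw [hy'def, qf_smul, hRy, mul_zero]
  have hcross : (star z ⬝ᵥ R *ᵥ y').re = 0 := by
    rw [hy'def, mulVec_smul, dotProduct_smul, smul_eq_mul]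
    exact hωc
  set w : ℝ → (n → ℂ) := fun s => (s : ℂ) • y' + ((1 - s : ℝ) : ℂ) • z with hw
  have hw0 : w 0 = z := by simp [hw]
  have hw1 : w 1 = y' := by simp [hw]
  have hwnz : ∀ s : ℝ, w s ≠ 0 := by
    intro s h0
    rcases eq_or_ne s 0 with rfl | hs
    · rw [hw0] at h0
      rw [h0] at hz
      simp [nsq', qf] at hz
    · have hso : (s : ℂ) * ω ≠ 0 := mul_ne_zero (Complex.ofReal_ne_zero.2 hs) hω0
      set μc : ℂ := -(((1 - s : ℝ)) : ℂ) / ((s : ℂ) * ω) with hμc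
      have hy2 : y = μc • z := by
        have h2 : ((s : ℂ) * ω) • y = -((((1 - s : ℝ)) : ℂ) • z) := by
          have h3 := eq_neg_of_add_eq_zero_left h0
          rw [hy'def, smul_smul] at h3
          exact h3
        have h4 : y = ((s : ℂ) * ω)⁻¹ • (((s : ℂ) * ω) • y) := (inv_smul_smul₀ hso y).symm
        rw [h2, ← neg_smul, smul_smul] at h4
        rw [h4, hμc, div_eq_inv_mul]
      have h1 : nsq' y = Complex.normSq μc * nsq' z := by rw [hy2, nsq'_smul]
      have hμ1 : Complex.normSq μc = 1 := by rw [hy, hz, mul_one] at h1; exact h1.symm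
      have e1 : a1 = b1 := by rw [ha1, hb1, hy2, qf_smul, hμ1, one_mul]
      have e2 : a2 = b2 := by rw [ha2, hb2, hy2, qf_smul, hμ1, one_mul]
      exact hab ⟨e1, e2⟩
  have hρ : ∀ s, 0 < nsq' (w s) := fun s => nsq_pos (hwnz s)
  have hexp : ∀ (M : Matrix n n ℂ), M.IsHermitian → ∀ s, qf M (w s)
      = s ^ 2 * qf M y' + (1 - s) ^ 2 * qf M z
        + 2 * (s * (1 - s)) * (star z ⬝ᵥ M *ᵥ y').re := by
    intro M hM s
    exact path_expand M hM y' z s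
  have hRw : ∀ s, qf R (w s) = 0 := by
    intro s
    rw [hexp R hR s, hRy', hRz, hcross]
    ring
  have hcont : ∀ (M : Matrix n n ℂ), M.IsHermitian → Continuous (fun s => qf M (w s)) := by
    intro M hM
    have h1 : (fun s => qf M (w s)) = fun s => s ^ 2 * qf M y' + (1 - s) ^ 2 * qf M z
        + 2 * (s * (1 - s)) * (star z ⬝ᵥ M *ᵥ y').re := funext (hexp M hM)
    rw [h1]; fun_prop
  have hcontN : Continuous (fun s => nsq' (w s)) := hcont 1 Matrix.isHermitian_one
  set μ : ℝ → ℝ := fun s => (d1 * (qf P (w s) / nsq' (w s) - b1)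
      + d2 * (qf Q (w s) / nsq' (w s) - b2)) / (d1 ^ 2 + d2 ^ 2) with hμdef
  have hμcont : Continuous μ := by
    apply Continuous.div_const
    apply Continuous.add
    · exact continuous_const.mul (((hcont P hP).div hcontN fun s => (hρ s).ne').sub
        continuous_const)
    · exact continuous_const.mul (((hcont Q hQ).div hcontN fun s => (hρ s).ne').sub
        continuous_const)
  have hμ0 : μ 0 = 0 := by
    rw [hμdef]
    simp only [hw0, hz, ← hb1, ← hb2]
    norm_num
  have hμ1 : μ 1 = 1 := by
    rw [hμdef]
    simp only [hw1, hyP, hyQ, hyN]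
    rw [mul_comm k a1, mul_comm k a2, mul_div_assoc, mul_div_assoc, div_self hk0.ne',
      mul_one, mul_one]
    field_simp
    ring
  obtain ⟨s, hs01, hst⟩ : ∃ s ∈ Set.Icc (0 : ℝ) 1, μ s = t := by
    have him := intermediate_value_Icc (by norm_num : (0:ℝ) ≤ 1) hμcont.continuousOn
    have ht : t ∈ Set.Icc (μ 0) (μ 1) := by rw [hμ0, hμ1]; exact ⟨ht0, ht1⟩
    exact him ht
  set ρ := nsq' (w s) with hρs
  have hρ0 : 0 < ρ := hρ s
  have e1 : -d2 * (qf P (w s) - ρ * b1) + d1 * (qf Q (w s) - ρ * b2) = 0 := by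
    have h0 := hRw s
    rw [qfR, hγb, ← hρs] at h0
    linear_combination h0
  have e2 : d1 * (qf P (w s) - ρ * b1) + d2 * (qf Q (w s) - ρ * b2)
      = t * (ρ * (d1 ^ 2 + d2 ^ 2)) := by
    have h0 : (d1 * (qf P (w s) / ρ - b1) + d2 * (qf Q (w s) / ρ - b2)) / (d1 ^ 2 + d2 ^ 2)
        = t := hst
    rw [div_eq_iff hd.ne'] at h0
    have hP' : qf P (w s) / ρ * ρ = qf P (w s) := div_mul_cancel₀ _ hρ0.ne'
    have hQ' : qf Q (w s) / ρ * ρ = qf Q (w s) := div_mul_cancel₀ _ hρ0.ne'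
    linear_combination ρ * h0 - d1 * hP' - d2 * hQ'
  have sol1 : qf P (w s) = ρ * (b1 + t * d1) := by
    have h3 : (d1 ^ 2 + d2 ^ 2) * (qf P (w s) - ρ * (b1 + t * d1)) = 0 := by
      linear_combination d1 * e2 - d2 * e1
    rcases mul_eq_zero.mp h3 with h | h
    · exact absurd h hd.ne'
    · linarith
  have sol2 : qf Q (w s) = ρ * (b2 + t * d2) := by
    have h3 : (d1 ^ 2 + d2 ^ 2) * (qf Q (w s) - ρ * (b2 + t * d2)) = 0 := by
      linear_combination d2 * e2 + d1 * e1
    rcases mul_eq_zero.mp h3 with h | h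
    · exact absurd h hd.ne'
    · linarith
  set r : ℝ := Real.sqrt ρ with hr
  have hr0 : 0 < r := Real.sqrt_pos.2 hρ0
  have hrsq : Complex.normSq ((r⁻¹ : ℝ) : ℂ) = ρ⁻¹ := by
    rw [Complex.normSq_ofReal]
    rw [← Real.sqrt_inv]
    exact Real.mul_self_sqrt (by positivity)
  refine ⟨((r⁻¹ : ℝ) : ℂ) • w s, ?_, ?_, ?_⟩
  · rw [nsq'_smul, hrsq, ← hρs, inv_mul_cancel₀ hρ0.ne']
  · rw [qf_smul, hrsq, sol1, inv_mul_cancel_left₀ hρ0.ne', hd1]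
    ring
  · rw [qf_smul, hrsq, sol2, inv_mul_cancel_left₀ hρ0.ne', hd2]
    ring

lemma qf_zero (M : Matrix n n ℂ) : qf M 0 = 0 := by simp [qf]

lemma sqrt_smul_qf (M : Matrix n n ℂ) (r : ℝ) (hr : 0 ≤ r) (x : n → ℂ) :
    qf M (((Real.sqrt r : ℝ) : ℂ) • x) = r * qf M x := by
  rw [qf_smul, Complex.normSq_ofReal, Real.mul_self_sqrt hr]

lemma image_convex (P Q : Matrix n n ℂ) (hP : P.IsHermitian) (hQ : Q.IsHermitian) :
    Convex ℝ {p : ℝ × ℝ | ∃ x : n → ℂ, p = (qf P x, qf Q x)} := by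
  rintro p ⟨x, rfl⟩ q ⟨z, rfl⟩ t1 t2 ht1 ht2 hsum
  simp only [Set.mem_setOf_eq, Prod.smul_mk, smul_eq_mul, Prod.mk_add_mk]
  by_cases hx : x = 0
  · refine ⟨((Real.sqrt t2 : ℝ) : ℂ) • z, ?_⟩
    rw [sqrt_smul_qf P t2 ht2, sqrt_smul_qf Q t2 ht2, hx, qf_zero, qf_zero]
    simp
  by_cases hz : z = 0
  · refine ⟨((Real.sqrt t1 : ℝ) : ℂ) • x, ?_⟩
    rw [sqrt_smul_qf P t1 ht1, sqrt_smul_qf Q t1 ht1, hz, qf_zero, qf_zero]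
    simp
  have hr1 : 0 < nsq' x := nsq_pos hx
  have hr2 : 0 < nsq' z := nsq_pos hz
  set r1 := nsq' x with hr1d
  set r2 := nsq' z with hr2d
  set u : n → ℂ := (((Real.sqrt r1)⁻¹ : ℝ) : ℂ) • x with hud
  set v : n → ℂ := (((Real.sqrt r2)⁻¹ : ℝ) : ℂ) • z with hvd
  have hnormu : Complex.normSq ((((Real.sqrt r1)⁻¹ : ℝ)) : ℂ) = r1⁻¹ := by
    rw [Complex.normSq_ofReal, ← Real.sqrt_inv, Real.mul_self_sqrt (by positivity)]
  have hnormv : Complex.normSq ((((Real.sqrt r2)⁻¹ : ℝ)) : ℂ) = r2⁻¹ := by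
    rw [Complex.normSq_ofReal, ← Real.sqrt_inv, Real.mul_self_sqrt (by positivity)]
  have hu1 : nsq' u = 1 := by rw [hud, nsq'_smul, hnormu, ← hr1d, inv_mul_cancel₀ hr1.ne']
  have hv1 : nsq' v = 1 := by rw [hvd, nsq'_smul, hnormv, ← hr2d, inv_mul_cancel₀ hr2.ne']
  set lam := t1 * r1 with hlam
  set kap := t2 * r2 with hkap
  have hlk : 0 < lam + kap := by
    rcases lt_or_eq_of_le ht1 with h | h
    · have : 0 < lam := by positivity
      have : 0 ≤ kap := by positivity
      linarith
    · have h2 : t2 = 1 := by linarith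
      have : 0 < kap := by rw [hkap, h2, one_mul]; exact hr2
      have : 0 ≤ lam := by positivity
      linarith
  set σ := lam / (lam + kap) with hσ
  have hσ0 : 0 ≤ σ := by positivity
  have hσ1 : σ ≤ 1 := by
    rw [hσ, div_le_one hlk]
    have : 0 ≤ kap := by positivity
    linarith
  obtain ⟨w, hw1, hwP, hwQ⟩ := sphere_step P Q hP hQ u v hu1 hv1 hσ0 hσ1
  refine ⟨((Real.sqrt (lam + kap) : ℝ) : ℂ) • w, ?_⟩
  rw [sqrt_smul_qf P _ hlk.le, sqrt_smul_qf Q _ hlk.le, hwP, hwQ]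
  have huP : qf P u = r1⁻¹ * qf P x := by rw [hud, qf_smul, hnormu]
  have huQ : qf Q u = r1⁻¹ * qf Q x := by rw [hud, qf_smul, hnormu]
  have hvP : qf P v = r2⁻¹ * qf P z := by rw [hvd, qf_smul, hnormv]
  have hvQ : qf Q v = r2⁻¹ * qf Q z := by rw [hvd, qf_smul, hnormv]
  rw [huP, huQ, hvP, hvQ]
  have key : ∀ gP gQ : ℝ, (lam + kap) * (σ * (r1⁻¹ * gP) + (1 - σ) * (r2⁻¹ * gQ))
      = t1 * gP + t2 * gQ := by
    intro gP gQ
    have h1 : (lam + kap) * σ = lam := by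
      rw [hσ, mul_div_cancel₀]
      exact hlk.ne'
    have h2 : (lam + kap) * (1 - σ) = kap := by
      have : (lam + kap) * (1 - σ) = (lam + kap) - (lam + kap) * σ := by ring
      rw [this, h1]; ring
    calc (lam + kap) * (σ * (r1⁻¹ * gP) + (1 - σ) * (r2⁻¹ * gQ))
        = ((lam + kap) * σ) * (r1⁻¹ * gP) + ((lam + kap) * (1 - σ)) * (r2⁻¹ * gQ) := by ring
      _ = lam * (r1⁻¹ * gP) + kap * (r2⁻¹ * gQ) := by rw [h1, h2]
      _ = t1 * (r1 * r1⁻¹) * gP + t2 * (r2 * r2⁻¹) * gQ := by rw [hlam, hkap]; ring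
      _ = t1 * gP + t2 * gQ := by
          rw [mul_inv_cancel₀ hr1.ne', mul_inv_cancel₀ hr2.ne', mul_one, mul_one]
  rw [key, key]

lemma homog_s_lemma (P Q : Matrix n n ℂ) (hP : P.IsHermitian) (hQ : Q.IsHermitian)
    (hyp : ∀ x : n → ℂ, qf P x ≤ 0 → qf Q x ≤ 0)
    (hstrict : ∃ x : n → ℂ, qf P x < 0) :
    ∃ δ : ℝ, 0 ≤ δ ∧ ∀ x : n → ℂ, 0 ≤ δ * qf P x - qf Q x := by
  set C := {p : ℝ × ℝ | ∃ x : n → ℂ, p = (qf P x, qf Q x)} with hCd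
  have hCconv : Convex ℝ C := image_convex P Q hP hQ
  set D := Set.Iio (0 : ℝ) ×ˢ Set.Ioi (0 : ℝ) with hDd
  have hDconv : Convex ℝ D := (convex_Iio 0).prod (convex_Ioi 0)
  have hDopen : IsOpen D := isOpen_Iio.prod isOpen_Ioi
  have hdisj : Disjoint D C := by
    rw [Set.disjoint_left]
    rintro p hpD ⟨x, rfl⟩
    have h1 : qf P x < 0 := hpD.1
    have h2 : (0 : ℝ) < qf Q x := hpD.2
    exact absurd (hyp x h1.le) (not_le.2 h2)
  obtain ⟨f, u0, hfD, hfC⟩ := geometric_hahn_banach_open hDconv hDopen hCconv hdisj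
  have h0C : ((0 : ℝ), (0 : ℝ)) ∈ C := ⟨0, by rw [qf_zero, qf_zero]⟩
  have hu0 : u0 ≤ 0 := by
    have := hfC _ h0C
    rw [show ((0 : ℝ), (0 : ℝ)) = (0 : ℝ × ℝ) from rfl, map_zero] at this
    simpa using this
  have hcone : ∀ p ∈ C, ∀ r : ℝ, 0 ≤ r → r • p ∈ C := by
    rintro p ⟨x, rfl⟩ r hr
    exact ⟨((Real.sqrt r : ℝ) : ℂ) • x, by
      rw [sqrt_smul_qf P r hr, sqrt_smul_qf Q r hr]; rfl⟩
  have hfC0 : ∀ p ∈ C, 0 ≤ f p := by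
    intro p hp
    by_contra h
    push_neg at h
    set r : ℝ := (u0 - 1) / f p with hrd
    have hr : 0 < r := div_pos_of_neg_of_neg (by linarith) h
    have hmem := hcone p hp r hr.le
    have := hfC _ hmem
    rw [f.map_smul, smul_eq_mul, hrd, div_mul_cancel₀ _ h.ne] at this
    linarith
  set α := f (1, 0) with hα
  set β := f (0, 1) with hβ
  have hf_eq : ∀ p : ℝ × ℝ, f p = α * p.1 + β * p.2 := by
    intro p
    have hp : p = p.1 • ((1 : ℝ), (0 : ℝ)) + p.2 • ((0 : ℝ), (1 : ℝ)) := by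
      ext <;> simp
    conv_lhs => rw [hp]
    rw [map_add, f.map_smul, f.map_smul, smul_eq_mul, smul_eq_mul, ← hα, ← hβ]
    ring
  have hDlt : ∀ a b : ℝ, a < 0 → 0 < b → α * a + β * b < 0 := by
    intro a b ha hb
    have := hfD (a, b) ⟨ha, hb⟩
    rw [hf_eq] at this
    simpa using lt_of_lt_of_le this hu0
  have hβ0 : β ≤ 0 := by
    by_contra h
    push_neg at h
    rcases le_or_gt α 0 with hal | hag
    · have := hDlt (-1) 1 (by norm_num) one_pos
      linarith
    · have hε : 0 < β / (2 * α) := by positivity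
      have := hDlt (-(β / (2 * α))) 1 (by linarith) one_pos
      have h2 : α * (-(β / (2 * α))) = -(β / 2) := by
        field_simp
      rw [h2] at this
      linarith
  have hα0 : 0 ≤ α := by
    by_contra h
    push_neg at h
    rcases eq_or_lt_of_le hβ0 with hb | hb
    · have := hDlt (-1) 1 (by norm_num) one_pos
      rw [hb] at this
      linarith
    · have hε : 0 < α / (2 * β) := div_pos_of_neg_of_neg h (by linarith)
      have := hDlt (-1) (α / (2 * β)) (by norm_num) hε
      have h2 : β * (α / (2 * β)) = α / 2 := by
        field_simp [hb.ne]
      rw [h2] at this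
      linarith
  have hCineq : ∀ x : n → ℂ, 0 ≤ α * qf P x + β * qf Q x := by
    intro x
    have := hfC0 _ ⟨x, rfl⟩
    rwa [hf_eq] at this
  rcases eq_or_lt_of_le hβ0 with hb | hb
  · exfalso
    obtain ⟨x0, hx0⟩ := hstrict
    have h1 := hCineq x0
    rw [hb, zero_mul, add_zero] at h1
    rcases eq_or_lt_of_le hα0 with ha | ha
    · have := hDlt (-1) 1 (by norm_num) one_pos
      rw [← ha, hb] at this
      linarith
    · nlinarith
  · refine ⟨α / (-β), div_nonneg hα0 (by linarith), fun x => ?_⟩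
    have h1 := hCineq x
    have h2 : 0 < -β := by linarith
    rw [div_mul_eq_mul_div, sub_nonneg, le_div_iff₀ h2]
    nlinarith

end SProc

namespace SProc

variable {N : ℕ}

lemma blockM_isHermitian (A : Matrix (Fin N) (Fin N) ℂ) (hA : A.IsHermitian)
    (b : Fin N → ℂ) (c : ℝ) : (blockM A b c).IsHermitian := by
  unfold Matrix.IsHermitian blockM
  rw [Matrix.fromBlocks_conjTranspose, Matrix.conjTranspose_replicateCol, Matrix.conjTranspose_replicateRow,
    star_star, hA.eq]
  have h : (Matrix.of fun _ _ : Unit => (c : ℂ))ᴴ = Matrix.of fun _ _ : Unit => (c : ℂ) := by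
    ext i j
    rw [Matrix.conjTranspose_apply, Complex.star_def]
    exact Complex.conj_ofReal c
  rw [h]

lemma blockM_q (A : Matrix (Fin N) (Fin N) ℂ) (b : Fin N → ℂ) (c : ℝ)
    (x : Fin N → ℂ) (t : ℂ) :
    star (Sum.elim x (fun _ : Unit => t)) ⬝ᵥ (blockM A b c) *ᵥ Sum.elim x (fun _ : Unit => t)
      = star x ⬝ᵥ A *ᵥ x + t * (star x ⬝ᵥ b) + (starRingEnd ℂ) t * (star b ⬝ᵥ x)
        + (c : ℂ) * ((starRingEnd ℂ) t * t) := by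
  rw [blockM, Matrix.fromBlocks_mulVec, Function.star_sumElim, sumElim_dotProduct_sumElim]
  simp only [Sum.elim_comp_inl, Sum.elim_comp_inr]
  have h1 : (Matrix.replicateCol Unit b) *ᵥ (fun _ : Unit => t) = t • b := by
    funext i
    simp [Matrix.mulVec, Matrix.replicateCol_apply, dotProduct, mul_comm]
  have h2 : (Matrix.replicateRow Unit (star b)) *ᵥ x = fun _ : Unit => star b ⬝ᵥ x := by
    funext u
    simp [Matrix.mulVec, Matrix.replicateRow_apply, dotProduct]
  have h3 : (Matrix.of fun _ _ : Unit => (c : ℂ)) *ᵥ (fun _ : Unit => t)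
      = fun _ : Unit => (c : ℂ) * t := by
    funext u
    simp [Matrix.mulVec, dotProduct]
  rw [h1, h2, h3]
  rw [dotProduct_add, dotProduct_add]
  have h4 : star x ⬝ᵥ (t • b) = t * (star x ⬝ᵥ b) := by
    rw [dotProduct_smul, smul_eq_mul]
  have h5 : star (fun _ : Unit => t) ⬝ᵥ (fun _ : Unit => star b ⬝ᵥ x)
      = (starRingEnd ℂ) t * (star b ⬝ᵥ x) := by
    rw [dotProduct, Fintype.sum_unique]
    rfl
  have h6 : star (fun _ : Unit => t) ⬝ᵥ (fun _ : Unit => (c : ℂ) * t)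
      = (starRingEnd ℂ) t * ((c : ℂ) * t) := by
    rw [dotProduct, Fintype.sum_unique]
    rfl
  rw [h4, h5, h6]
  ring

lemma quadF_eq_qf (A : Matrix (Fin N) (Fin N) ℂ) (hA : A.IsHermitian) (b : Fin N → ℂ) (c : ℝ)
    (x : Fin N → ℂ) :
    quadF A b c x = qf (blockM A b c) (Sum.elim x (fun _ : Unit => (1 : ℂ))) := by
  rw [qf, blockM_q]
  have hsym : (star x ⬝ᵥ b).re = (star b ⬝ᵥ x).re := by
    have : star x ⬝ᵥ b = (starRingEnd ℂ) (star b ⬝ᵥ x) := by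
      rw [star_dotProduct]
      rfl
    rw [this, Complex.conj_re]
  rw [quadF]
  have h1 : (starRingEnd ℂ) (1 : ℂ) = 1 := RingHom.map_one _
  rw [h1]
  simp only [one_mul, mul_one]
  rw [Complex.add_re, Complex.add_re, Complex.add_re, Complex.ofReal_re, hsym]
  ring

lemma qf_block_zero (A : Matrix (Fin N) (Fin N) ℂ) (b : Fin N → ℂ) (c : ℝ) (x : Fin N → ℂ) :
    qf (blockM A b c) (Sum.elim x (fun _ : Unit => (0 : ℂ))) = (star x ⬝ᵥ A *ᵥ x).re := by
  rw [qf, blockM_q]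
  simp

lemma quad_shift (A : Matrix (Fin N) (Fin N) ℂ) (hA : A.IsHermitian) (b : Fin N → ℂ) (c : ℝ)
    (xhat x : Fin N → ℂ) (ω : ℂ) (s : ℝ) :
    quadF A b c (xhat + ((s : ℂ) * ω) • x)
      = quadF A b c xhat + s ^ 2 * Complex.normSq ω * (star x ⬝ᵥ A *ᵥ x).re
        + 2 * s * (ω * (star xhat ⬝ᵥ A *ᵥ x + star b ⬝ᵥ x)).re := by
  have hq : qf A (xhat + ((s : ℂ) * ω) • x)
      = qf A xhat + s ^ 2 * Complex.normSq ω * qf A x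
        + 2 * (s * (ω * (star xhat ⬝ᵥ A *ᵥ x)).re) := by
    rw [qf_add A hA]
    have h1 : qf A (((s : ℂ) * ω) • x) = s ^ 2 * Complex.normSq ω * qf A x := by
      rw [qf_smul, Complex.normSq_mul, Complex.normSq_ofReal]; ring
    have h2 : (star (((s : ℂ) * ω) • x) ⬝ᵥ A *ᵥ xhat).re
        = s * (ω * (star xhat ⬝ᵥ A *ᵥ x)).re := by
      rw [← conj_cross A hA xhat (((s : ℂ) * ω) • x), Complex.conj_re, mulVec_smul,
        dotProduct_smul, smul_eq_mul, mul_assoc, Complex.re_ofReal_mul]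
    rw [h1, h2]
  have hb : (star b ⬝ᵥ (xhat + ((s : ℂ) * ω) • x)).re
      = (star b ⬝ᵥ xhat).re + s * (ω * (star b ⬝ᵥ x)).re := by
    rw [dotProduct_add, dotProduct_smul, smul_eq_mul, Complex.add_re, mul_assoc,
      Complex.re_ofReal_mul]
  have hsum : (ω * (star xhat ⬝ᵥ A *ᵥ x + star b ⬝ᵥ x)).re
      = (ω * (star xhat ⬝ᵥ A *ᵥ x)).re + (ω * (star b ⬝ᵥ x)).re := by
    rw [mul_add, Complex.add_re]
  show qf A (xhat + ((s : ℂ) * ω) • x) + 2 * (star b ⬝ᵥ (xhat + ((s : ℂ) * ω) • x)).re + c = _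
  rw [hq, hb, hsum]
  have hx : (star x ⬝ᵥ A *ᵥ x).re = qf A x := rfl
  rw [hx]
  show _ = qf A xhat + 2 * (star b ⬝ᵥ xhat).re + c + _ + _
  ring

end SProc

open SProc in
/-- S-Procedure. -/
theorem s_procedure {N : ℕ} (hN : 1 ≤ N)
    (A₁ A₂ : Matrix (Fin N) (Fin N) ℂ) (hA₁ : A₁.IsHermitian) (hA₂ : A₂.IsHermitian)
    (b₁ b₂ : Fin N → ℂ) (c₁ c₂ : ℝ)
    (hstrict : ∃ xhat : Fin N → ℂ, quadF A₁ b₁ c₁ xhat < 0) :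
    (∀ x : Fin N → ℂ, quadF A₁ b₁ c₁ x ≤ 0 → quadF A₂ b₂ c₂ x ≤ 0) ↔
      ∃ δ : ℝ, 0 ≤ δ ∧
        ((δ : ℂ) • blockM A₁ b₁ c₁ - blockM A₂ b₂ c₂).PosSemidef := by
  have hM₁ : (blockM A₁ b₁ c₁).IsHermitian := blockM_isHermitian A₁ hA₁ b₁ c₁
  have hM₂ : (blockM A₂ b₂ c₂).IsHermitian := blockM_isHermitian A₂ hA₂ b₂ c₂
  constructor
  · intro H
    obtain ⟨xhat, hxhat⟩ := hstrict
    have homog : ∀ y : (Fin N ⊕ Unit) → ℂ,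
        qf (blockM A₁ b₁ c₁) y ≤ 0 → qf (blockM A₂ b₂ c₂) y ≤ 0 := by
      intro y hy1
      set x : Fin N → ℂ := y ∘ Sum.inl with hx
      set t : ℂ := y (Sum.inr ()) with ht
      have hy : y = Sum.elim x (fun _ : Unit => t) := by
        funext i
        rcases i with i | u
        · rfl
        · cases u; rfl
      by_cases htz : t = 0
      · rw [hy, htz, qf_block_zero] at hy1
        rw [hy, htz, qf_block_zero]
        set L₁ : ℂ := star xhat ⬝ᵥ A₁ *ᵥ x + star b₁ ⬝ᵥ x with hL₁
        set ω : ℂ := if L₁ = 0 then 1 else -((starRingEnd ℂ) L₁) with hω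
        have hω0 : ω ≠ 0 := by
          rw [hω]; split_ifs with h
          · exact one_ne_zero
          · simpa using h
        have hωL : (ω * L₁).re ≤ 0 := by
          rw [hω]; split_ifs with h
          · simp [h]
          · have hLL : (starRingEnd ℂ) L₁ * L₁ = (Complex.normSq L₁ : ℂ) := by
              rw [mul_comm, Complex.mul_conj]
            rw [neg_mul, hLL]
            simp [Complex.normSq_nonneg]
        have hk0 : 0 < Complex.normSq ω := Complex.normSq_pos.2 hω0
        have hf1 : ∀ s : ℝ, 0 ≤ s → quadF A₁ b₁ c₁ (xhat + ((s : ℂ) * ω) • x) ≤ 0 := by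
          intro s hs
          rw [quad_shift A₁ hA₁, ← hL₁]
          have t1 : s ^ 2 * Complex.normSq ω * (star x ⬝ᵥ A₁ *ᵥ x).re ≤ 0 :=
            mul_nonpos_of_nonneg_of_nonpos (by positivity) hy1
          have t2 : 2 * s * (ω * L₁).re ≤ 0 :=
            mul_nonpos_of_nonneg_of_nonpos (by linarith) hωL
          linarith
        have hf2 : ∀ s : ℝ, 0 ≤ s → quadF A₂ b₂ c₂ (xhat + ((s : ℂ) * ω) • x) ≤ 0 :=
          fun s hs => H _ (hf1 s hs)
        by_contra hpos
        push_neg at hpos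
        set E := (star x ⬝ᵥ A₂ *ᵥ x).re with hE
        set W := (ω * (star xhat ⬝ᵥ A₂ *ᵥ x + star b₂ ⬝ᵥ x)).re with hW
        set Cc := quadF A₂ b₂ c₂ xhat with hCc
        set k := Complex.normSq ω with hkd
        have hkE : 0 < k * E := mul_pos hk0 hpos
        set s0 : ℝ := max 1 ((2 * |W| + |Cc| + 1) / (k * E)) with hs0
        have hs01 : 1 ≤ s0 := le_max_left _ _
        have hs0pos : 0 ≤ s0 := by linarith
        have hs02 : 2 * |W| + |Cc| + 1 ≤ s0 * (k * E) := by
          have hmax := le_max_right 1 ((2 * |W| + |Cc| + 1) / (k * E))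
          calc 2 * |W| + |Cc| + 1 = ((2 * |W| + |Cc| + 1) / (k * E)) * (k * E) := by
                field_simp
            _ ≤ s0 * (k * E) := mul_le_mul_of_nonneg_right hmax hkE.le
        have hval := hf2 s0 hs0pos
        rw [quad_shift A₂ hA₂, ← hCc, ← hE, ← hW, ← hkd] at hval
        have hWa : -|W| ≤ W := neg_abs_le W
        have hCa : -|Cc| ≤ Cc := neg_abs_le Cc
        have q1 : s0 * (2 * |W| + |Cc| + 1) ≤ s0 * (s0 * (k * E)) :=
          mul_le_mul_of_nonneg_left hs02 hs0pos
        have q2 : 2 * s0 * -|W| ≤ 2 * s0 * W :=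
          mul_le_mul_of_nonneg_left hWa (by linarith)
        have q3 : 1 * |Cc| ≤ s0 * |Cc| :=
          mul_le_mul_of_nonneg_right hs01 (abs_nonneg Cc)
        have q4 : s0 ^ 2 * k * E = s0 * (s0 * (k * E)) := by ring
        nlinarith [q1, q2, q3, q4, hCa, hval, hs01]
      · have hsplit : y = t • (Sum.elim (t⁻¹ • x) (fun _ : Unit => (1 : ℂ))) := by
          rw [hy]
          funext i
          rcases i with i | u
          · show x i = t * (t⁻¹ * x i)
            rw [← mul_assoc, mul_inv_cancel₀ htz, one_mul]
          · show t = t * 1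
            rw [mul_one]
        have ht0 : 0 < Complex.normSq t := Complex.normSq_pos.2 htz
        rw [hsplit, qf_smul, ← quadF_eq_qf A₁ hA₁] at hy1
        rw [hsplit, qf_smul, ← quadF_eq_qf A₂ hA₂]
        have hf : quadF A₁ b₁ c₁ (t⁻¹ • x) ≤ 0 := by nlinarith
        have := H _ hf
        exact mul_nonpos_of_nonneg_of_nonpos ht0.le this
    have hstrict' : ∃ y, qf (blockM A₁ b₁ c₁) y < 0 :=
      ⟨Sum.elim xhat (fun _ : Unit => (1 : ℂ)), by rw [← quadF_eq_qf A₁ hA₁]; exact hxhat⟩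
    obtain ⟨δ, hδ0, hδ⟩ := homog_s_lemma _ _ hM₁ hM₂ homog hstrict'
    refine ⟨δ, hδ0, Matrix.posSemidef_iff_dotProduct_mulVec.mpr ⟨?_, ?_⟩⟩
    · exact (isHermitian_real_smul hM₁).sub hM₂
    · intro y
      have hherm : ((δ : ℂ) • blockM A₁ b₁ c₁ - blockM A₂ b₂ c₂).IsHermitian :=
        (isHermitian_real_smul hM₁).sub hM₂
      set z := star y ⬝ᵥ ((δ : ℂ) • blockM A₁ b₁ c₁ - blockM A₂ b₂ c₂) *ᵥ y with hz
      have hconj : (starRingEnd ℂ) z = z := conj_cross _ hherm y y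
      have him : z.im = 0 := by
        have := Complex.conj_eq_iff_im.mp hconj
        exact this
      have hre : 0 ≤ z.re := by
        have h1 : z.re = qf ((δ : ℂ) • blockM A₁ b₁ c₁ - blockM A₂ b₂ c₂) y := rfl
        rw [h1, qf_subM, qf_smulM]
        exact hδ y
      rw [Complex.le_def]
      constructor
      · simpa using hre
      · simp [him]
  · rintro ⟨δ, hδ0, hPSD⟩ x hx1
    have h := hPSD.dotProduct_mulVec_nonneg (Sum.elim x (fun _ : Unit => (1 : ℂ)))
    have hre : 0 ≤ (star (Sum.elim x (fun _ : Unit => (1 : ℂ))) ⬝ᵥ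
        ((δ : ℂ) • blockM A₁ b₁ c₁ - blockM A₂ b₂ c₂) *ᵥ
        (Sum.elim x (fun _ : Unit => (1 : ℂ)))).re := by
      have := (Complex.le_def.mp h).1
      simpa using this
    have hqf : qf ((δ : ℂ) • blockM A₁ b₁ c₁ - blockM A₂ b₂ c₂)
        (Sum.elim x (fun _ : Unit => (1 : ℂ)))
        = δ * quadF A₁ b₁ c₁ x - quadF A₂ b₂ c₂ x := by
      rw [qf_subM, qf_smulM, ← quadF_eq_qf A₁ hA₁, ← quadF_eq_qf A₂ hA₂]
    have h2 : 0 ≤ δ * quadF A₁ b₁ c₁ x - quadF A₂ b₂ c₂ x := by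
      rw [← hqf]
      exact hre
    have h3 : δ * quadF A₁ b₁ c₁ x ≤ 0 := mul_nonpos_of_nonneg_of_nonpos hδ0 hx1
    linarith
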